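/- Let R be a finite group, φ ∈ Aut(R) with A := C_R(φ) of index 3 in R and A normal in R, and suppose there exists x ∈ R \ A with x^φ = x⁻¹ and x of odd order with R = A ∪ Ax ∪ Ax⁻¹. Then x is central in R. -/

import Mathlib

/-- If `A = C_R(φ)` is normal of index 3 in the finite group `R`, `x ∈ R \ A` has odd
order, `φ x = x⁻¹`, and `R = A ∪ Ax ∪ Ax⁻¹`, then `x` is central in `R`. -/
theorem central_element_index_three (R : Type*) [Group R] [Fintype R]
    (φ : R ≃* R) (A : Subgroup R) (hA : ∀ a : R, a ∈ A ↔ φ a = a)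
    (hnorm : A.Normal) (hidx : A.index = 3)
    (x : R) (hx : x ∉ A) (hxφ : φ x = x⁻¹) (hodd : Odd (orderOf x))
    (hcosets : ∀ g : R, g ∈ A ∨ (∃ a ∈ A, g = a * x) ∨ ∃ a ∈ A, g = a * x⁻¹) :
    x ∈ Subgroup.center R := by
  have hcomm : ∀ a ∈ A, x * x * a = a * (x * x) := by
    intro a ha
    have hb : x * a * x⁻¹ ∈ A := hnorm.conj_mem a ha x
    have hfb : φ (x * a * x⁻¹) = x * a * x⁻¹ := (hA _).mp hb
    have key : x⁻¹ * a * x = x * a * x⁻¹ := by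
      rw [← hfb]; simp [map_mul, hxφ, (hA a).mp ha]
    have := congrArg (fun g => x * g * x) key
    calc x * x * a = x * (x * a * x⁻¹) * x := by group
      _ = x * (x⁻¹ * a * x) * x := by rw [key]
      _ = a * (x * x) := by group
  have hx2 : x * x ∈ Subgroup.center R := by
    rw [Subgroup.mem_center_iff]
    intro g
    rcases hcosets g with hg | ⟨a, ha, rfl⟩ | ⟨a, ha, rfl⟩
    · exact (hcomm g hg).symm
    · have := hcomm a ha
      calc a * x * (x * x) = a * (x * x) * x := by group
        _ = x * x * a * x := by rw [this]
        _ = x * x * (a * x) := by group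
    · have := hcomm a ha
      calc a * x⁻¹ * (x * x) = a * (x * x) * x⁻¹ := by group
        _ = x * x * a * x⁻¹ := by rw [this]
        _ = x * x * (a * x⁻¹) := by group
  obtain ⟨m, hm⟩ := hodd
  have hxeq : x = (x * x) ^ (m + 1) := by
    have h1 : x ^ orderOf x = 1 := pow_orderOf_eq_one x
    have : (x * x) ^ (m + 1) = x ^ (2 * m + 1) * x := by
      rw [← sq, ← pow_mul, ← pow_succ]; ring_nf
    rw [this, ← hm, h1, one_mul]
  rw [hxeq]
  exact pow_mem hx2 _
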